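/- arXiv:2302.08490 — 2 statements merged into one kernel-verified Lean document; each statement's English description precedes it below -/
import Mathlib

section
/- Let Y ∈ ℝ^{M×R} with orthonormal columns, Y_n ∈ ℝ^{R×n} with orthonormal columns, P ∈ ℝ^{M×R} a selection matrix such that PᵀY is invertible. Set Y_α = Y Y_n. Then ‖Y_n (PᵀY_α)†‖ ≤ ‖(PᵀY)^{-1}‖, where (PᵀY_α)† is the Moore–Penrose pseudo-inverse of PᵀY Y_n ∈ ℝ^{R×n}. -/
open Matrix

noncomputable def specNorm {m n : ℕ} (A : Matrix (Fin m) (Fin n) ℝ) : ℝ :=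
  ‖LinearMap.toContinuousLinearMap (Matrix.toEuclideanLin A)‖

lemma specNorm_mul_le {m k n : ℕ} (A : Matrix (Fin m) (Fin k) ℝ)
    (B : Matrix (Fin k) (Fin n) ℝ) :
    specNorm (A * B) ≤ specNorm A * specNorm B := by
  have h : LinearMap.toContinuousLinearMap (Matrix.toEuclideanLin (A * B)) =
      (LinearMap.toContinuousLinearMap (Matrix.toEuclideanLin A)).comp
        (LinearMap.toContinuousLinearMap (Matrix.toEuclideanLin B)) := by
    ext x
    simp [Matrix.toEuclideanLin_apply, Matrix.mulVec_mulVec]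
  rw [specNorm, h]
  exact ContinuousLinearMap.opNorm_comp_le _ _

lemma inner_toEuclideanLin {m k : ℕ} (A : Matrix (Fin m) (Fin k) ℝ)
    (x : EuclideanSpace ℝ (Fin k)) (y : EuclideanSpace ℝ (Fin m)) :
    (inner ℝ (Matrix.toEuclideanLin A x) y : ℝ) = inner ℝ x (Matrix.toEuclideanLin Aᵀ y) := by
  have hA : Aᵀ = Aᴴ := by ext i j; simp [Matrix.conjTranspose_apply]
  rw [hA, Matrix.toEuclideanLin_conjTranspose_eq_adjoint, LinearMap.adjoint_inner_right]

lemma proj_specNorm_le_one {m k : ℕ} (A : Matrix (Fin m) (Fin k) ℝ) :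
    specNorm (A * (Aᵀ * A)⁻¹ * Aᵀ) ≤ 1 := by
  set S := Aᵀ * A with hS
  by_cases h : IsUnit S.det
  · set Q := A * S⁻¹ * Aᵀ with hQ
    have hsymm : Qᵀ = Q := by
      rw [hQ]
      simp [Matrix.transpose_mul, Matrix.transpose_nonsing_inv, Matrix.mul_assoc, hS]
    have hinvS : S⁻¹ * S = 1 := Matrix.nonsing_inv_mul _ h
    have hidem : Q * Q = Q := by
      rw [hQ]
      rw [show A * S⁻¹ * Aᵀ * (A * S⁻¹ * Aᵀ) = A * (S⁻¹ * (Aᵀ * A) * S⁻¹) * Aᵀ by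
        simp only [Matrix.mul_assoc]]
      rw [← hS, hinvS, Matrix.one_mul]
    refine ContinuousLinearMap.opNorm_le_bound _ zero_le_one fun x => ?_
    rw [one_mul]
    simp only [LinearMap.coe_toContinuousLinearMap']
    set T := Matrix.toEuclideanLin Q with hT
    have h2 : T (T x) = T x := by
      have : T (T x) = Matrix.toEuclideanLin (Q * Q) x := by
        simp [hT, Matrix.toEuclideanLin_apply, Matrix.mulVec_mulVec]
      rw [this, hidem]
    have h1 : (inner ℝ (T x) (T x) : ℝ) = inner ℝ x (T x) := by
      rw [hT, inner_toEuclideanLin, hsymm, ← hT, h2]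
    have key : ‖T x‖ ^ 2 ≤ ‖x‖ * ‖T x‖ := by
      rw [← real_inner_self_eq_norm_sq, h1]
      exact real_inner_le_norm x (T x)
    nlinarith [norm_nonneg (T x), norm_nonneg x]
  · have h0 : S⁻¹ = 0 := Matrix.nonsing_inv_apply_not_isUnit _ h
    rw [h0]
    simp only [Matrix.mul_zero, Matrix.zero_mul]
    have : specNorm (0 : Matrix (Fin m) (Fin m) ℝ) = 0 := by
      simp only [specNorm, map_zero, norm_zero]
    rw [this]; exact zero_le_one

/-- Moore–Penrose pseudo-inverse of a full-column-rank matrix: `A† = (AᵀA)⁻¹Aᵀ`. -/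
noncomputable def leftPinv {R n : ℕ} (A : Matrix (Fin R) (Fin n) ℝ) :
    Matrix (Fin n) (Fin R) ℝ :=
  (Aᵀ * A)⁻¹ * Aᵀ

/-- `‖Yₙ (PᵀY_α)†‖ ≤ ‖(PᵀY)⁻¹‖` where `Y_α = Y Yₙ`, `Y` and `Yₙ` have orthonormal
columns and `P` is a selection matrix with `PᵀY` invertible. -/
theorem local_pinv_spec_bound {M R n : ℕ} (hMR : R ≤ M) (hRn : n ≤ R)
    (Y : Matrix (Fin M) (Fin R) ℝ) (hY : Yᵀ * Y = 1)
    (Yn : Matrix (Fin R) (Fin n) ℝ) (hYn : Ynᵀ * Yn = 1)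
    (η : Fin R → Fin M) (hη : Function.Injective η)
    (P : Matrix (Fin M) (Fin R) ℝ)
    (hP : ∀ i j, P i j = if i = η j then 1 else 0)
    (hinv : IsUnit (Pᵀ * Y)) :
    specNorm (Yn * leftPinv (Pᵀ * Y * Yn)) ≤ specNorm ((Pᵀ * Y)⁻¹) := by
  set B := Pᵀ * Y with hB
  set A := B * Yn with hA
  have hdet : IsUnit B.det := (Matrix.isUnit_iff_isUnit_det B).mp hinv
  have hBinv : B⁻¹ * B = 1 := Matrix.nonsing_inv_mul _ hdet
  have hid : Yn * leftPinv A = B⁻¹ * (A * (Aᵀ * A)⁻¹ * Aᵀ) := by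
    rw [leftPinv]
    rw [show B⁻¹ * (A * (Aᵀ * A)⁻¹ * Aᵀ) = B⁻¹ * B * (Yn * ((Aᵀ * A)⁻¹ * Aᵀ)) by
      rw [hA]; simp only [Matrix.mul_assoc]]
    rw [hBinv, Matrix.one_mul]
  calc specNorm (Yn * leftPinv A) = specNorm (B⁻¹ * (A * (Aᵀ * A)⁻¹ * Aᵀ)) := by rw [hid]
    _ ≤ specNorm B⁻¹ * specNorm (A * (Aᵀ * A)⁻¹ * Aᵀ) := specNorm_mul_le _ _
    _ ≤ specNorm B⁻¹ * 1 := by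
        have := proj_specNorm_le_one A
        have h0 : (0:ℝ) ≤ specNorm B⁻¹ := norm_nonneg _
        nlinarith
    _ = specNorm B⁻¹ := mul_one _
end

section
/- Under the hypotheses of the previous setup (Y orthonormal M×R, Y_n orthonormal R×n, P a selection matrix with PᵀY invertible, Y_α = Y Y_n), the least-squares interpolation operator satisfies ‖I - Y_α (PᵀY_α)† Pᵀ‖ ≤ ‖(PᵀY)^{-1}‖, provided Y_α (PᵀY_α)† Pᵀ is neither 0 nor I. -/
open Matrix

section Pre
open scoped Matrix.Norms.L2Operator RealInnerProductSpace

noncomputable def app {m n : ℕ} (A : Matrix (Fin m) (Fin n) ℝ) (x : EuclideanSpace ℝ (Fin n)) :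
    EuclideanSpace ℝ (Fin m) := Matrix.toEuclideanLin A x

lemma app_le {m n : ℕ} (A : Matrix (Fin m) (Fin n) ℝ) (x : EuclideanSpace ℝ (Fin n)) :
    ‖app A x‖ ≤ ‖A‖ * ‖x‖ :=
  (LinearMap.toContinuousLinearMap (Matrix.toEuclideanLin A)).le_opNorm x

lemma norm_le_of_app {m n : ℕ} (A : Matrix (Fin m) (Fin n) ℝ) {c : ℝ} (hc : 0 ≤ c)
    (h : ∀ x, ‖app A x‖ ≤ c * ‖x‖) : ‖A‖ ≤ c :=
  ContinuousLinearMap.opNorm_le_bound _ hc h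

lemma app_mul {m n k : ℕ} (A : Matrix (Fin m) (Fin n) ℝ) (B : Matrix (Fin n) (Fin k) ℝ)
    (x : EuclideanSpace ℝ (Fin k)) : app (A * B) x = app A (app B x) := by
  simp [app, Matrix.toEuclideanLin_apply, Matrix.mulVec_mulVec]

lemma app_one {m : ℕ} (x : EuclideanSpace ℝ (Fin m)) : app (1 : Matrix (Fin m) (Fin m) ℝ) x = x := by
  simp [app, Matrix.toEuclideanLin_apply]

lemma app_sub {m n : ℕ} (A B : Matrix (Fin m) (Fin n) ℝ) (x : EuclideanSpace ℝ (Fin n)) :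
    app (A - B) x = app A x - app B x := by
  simp [app]

lemma app_zero {m n : ℕ} (x : EuclideanSpace ℝ (Fin n)) :
    app (0 : Matrix (Fin m) (Fin n) ℝ) x = 0 := by
  simp [app]

lemma app_map_sub {m n : ℕ} (A : Matrix (Fin m) (Fin n) ℝ) (x y : EuclideanSpace ℝ (Fin n)) :
    app A (x - y) = app A x - app A y := map_sub _ _ _

lemma le_of_sq_le_sq2 {a b : ℝ} (hb : 0 ≤ b) (h : a ^ 2 ≤ b ^ 2) (ha : 0 ≤ a) : a ≤ b := by
  nlinarith

lemma conjT_eq {m n : ℕ} (A : Matrix (Fin m) (Fin n) ℝ) : Aᴴ = Aᵀ :=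
  Matrix.conjTranspose_eq_transpose_of_trivial A

lemma inner_app {m n : ℕ} (A : Matrix (Fin m) (Fin n) ℝ) (x : EuclideanSpace ℝ (Fin n))
    (y : EuclideanSpace ℝ (Fin m)) : ⟪app A x, y⟫ = ⟪x, app Aᵀ y⟫ := by
  rw [app, app, ← conjT_eq, Matrix.toEuclideanLin_conjTranspose_eq_adjoint,
    LinearMap.adjoint_inner_right]

lemma normT {m n : ℕ} (A : Matrix (Fin m) (Fin n) ℝ) : ‖Aᵀ‖ = ‖A‖ := by
  rw [← conjT_eq]; exact Matrix.l2_opNorm_conjTranspose A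

section Proj
variable {N : ℕ} (q : Matrix (Fin N) (Fin N) ℝ) (hqs : qᵀ = q) (hqq : q * q = q)

include hqs hqq in
lemma proj_orth (v w : EuclideanSpace ℝ (Fin N)) : ⟪app q v, w - app q w⟫ = 0 := by
  rw [inner_app, hqs, app_map_sub, ← app_mul, hqq, sub_self, inner_zero_right]

include hqs hqq in
lemma pyth (v : EuclideanSpace ℝ (Fin N)) :
    ‖v‖ ^ 2 = ‖app q v‖ ^ 2 + ‖v - app q v‖ ^ 2 := by
  have h := proj_orth q hqs hqq v v
  calc ‖v‖ ^ 2 = ‖app q v + (v - app q v)‖ ^ 2 := by rw [add_sub_cancel]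
    _ = ‖app q v‖ ^ 2 + 2 * ⟪app q v, v - app q v⟫ + ‖v - app q v‖ ^ 2 := norm_add_sq_real _ _
    _ = _ := by rw [h]; ring

include hqs hqq in
lemma app_q_le (v : EuclideanSpace ℝ (Fin N)) : ‖app q v‖ ≤ ‖v‖ := by
  have h := pyth q hqs hqq v
  nlinarith [sq_nonneg ‖v - app q v‖, norm_nonneg (app q v), norm_nonneg v]

include hqs hqq in
lemma perp_q_le (v : EuclideanSpace ℝ (Fin N)) : ‖v - app q v‖ ≤ ‖v‖ := by
  have h := pyth q hqs hqq v
  nlinarith [sq_nonneg ‖app q v‖, norm_nonneg (v - app q v), norm_nonneg v]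

end Proj

set_option maxHeartbeats 1000000 in
lemma kato {N : ℕ} (p q : Matrix (Fin N) (Fin N) ℝ) (hqs : qᵀ = q) (hqq : q * q = q)
    (hqp : q * p = p) (hpq : p * q = q) (hq0 : q ≠ 0) : ‖1 - p‖ ≤ ‖p‖ := by
  have hqpT : q * pᵀ = q := by
    have : (p * q)ᵀ = qᵀ := by rw [hpq]
    rwa [Matrix.transpose_mul, hqs] at this
  have hpTq : pᵀ * q = pᵀ := by
    have : (q * p)ᵀ = pᵀ := by rw [hqp]
    rwa [Matrix.transpose_mul, hqs] at this
  -- a vector not killed by q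
  obtain ⟨x₀, hx₀⟩ : ∃ x, app q x ≠ 0 := by
    by_contra h
    push_neg at h
    apply hq0
    have : Matrix.toEuclideanLin q = 0 := by
      ext1 x; exact h x
    simpa using Matrix.toEuclideanLin.map_eq_zero_iff.mp this
  set u₀ := app q x₀ with hu₀
  have hqu₀ : app q u₀ = u₀ := by rw [hu₀, ← app_mul, hqq]
  -- ‖p‖ ≥ 1
  have hnp1 : 1 ≤ ‖p‖ := by
    have h1 : ‖u₀‖ ≤ ‖app pᵀ u₀‖ := by
      have hp := pyth q hqs hqq (app pᵀ u₀)
      have : app q (app pᵀ u₀) = u₀ := by rw [← app_mul, hqpT, hqu₀]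
      rw [this] at hp
      nlinarith [sq_nonneg ‖app pᵀ u₀ - u₀‖, norm_nonneg (app pᵀ u₀), norm_nonneg u₀]
    have h2 : ‖app pᵀ u₀‖ ≤ ‖p‖ * ‖u₀‖ := by
      have := app_le pᵀ u₀; rwa [normT] at this
    have hu : 0 < ‖u₀‖ := norm_pos_iff.mpr hx₀
    nlinarith
  set c := Real.sqrt (‖p‖ ^ 2 - 1) with hcdef
  have hc : 0 ≤ c := Real.sqrt_nonneg _
  have hc2 : c ^ 2 = ‖p‖ ^ 2 - 1 := Real.sq_sqrt (by nlinarith)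
  -- ‖(1-q) pᵀ‖ ≤ c
  have hr : ‖(1 - q) * pᵀ‖ ≤ c := by
    refine norm_le_of_app _ hc fun z => ?_
    set w := app q z with hw
    set v := app pᵀ w with hv
    have hqv : app q v = w := by rw [hv, ← app_mul, hqpT, hw, ← app_mul, hqq]
    have happ : app ((1 - q) * pᵀ) z = v - app q v := by
      have h1 : (1 - q) * pᵀ = (1 - q) * pᵀ * q := by
        rw [Matrix.mul_assoc, hpTq]
      rw [h1, app_mul, app_mul, ← hw, ← hv, app_sub, app_one]
    have hvle : ‖v‖ ≤ ‖p‖ * ‖w‖ := by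
      have := app_le pᵀ w; rwa [normT] at this
    have hwz : ‖w‖ ≤ ‖z‖ := app_q_le q hqs hqq z
    have hpy := pyth q hqs hqq v
    rw [hqv] at hpy
    have hsq : ‖app ((1 - q) * pᵀ) z‖ ^ 2 ≤ (c * ‖z‖) ^ 2 := by
      rw [happ]
      have h3 : ‖v - app q v‖ ^ 2 = ‖v‖ ^ 2 - ‖w‖ ^ 2 := by rw [hqv]; linarith [hpy]
      rw [h3]
      have hw0 : 0 ≤ ‖w‖ := norm_nonneg _
      have hz0 : 0 ≤ ‖z‖ := norm_nonneg _
      have hv2 : ‖v‖ ^ 2 ≤ ‖p‖ ^ 2 * ‖w‖ ^ 2 := by nlinarith [norm_nonneg v]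
      have hw2 : ‖w‖ ^ 2 ≤ ‖z‖ ^ 2 := by nlinarith
      have e1 : (c * ‖z‖) ^ 2 = c ^ 2 * ‖z‖ ^ 2 := by ring
      rw [e1, hc2]
      have hp1 : (0:ℝ) ≤ ‖p‖ ^ 2 - 1 := by nlinarith [hnp1]
      have h6 := mul_le_mul_of_nonneg_left hw2 hp1
      nlinarith
    exact le_of_sq_le_sq2 (mul_nonneg hc (norm_nonneg _)) hsq (norm_nonneg _)
  have hr2 : ‖p * (1 - q)‖ ≤ c := by
    have ht : (p * (1 - q))ᵀ = (1 - q) * pᵀ := by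
      rw [Matrix.transpose_mul, Matrix.transpose_sub, Matrix.transpose_one, hqs]
    rw [← normT, ht]
    exact hr
  -- final bound
  refine norm_le_of_app _ (norm_nonneg p) fun x => ?_
  set w := x - app q x with hw
  have hw' : app (1 - q) x = w := by rw [app_sub, app_one, hw]
  have hqw : app q w = 0 := by
    rw [hw, app_map_sub, ← app_mul, hqq, sub_self]
  have h1mw : app (1 - q) w = w := by rw [app_sub, app_one, hqw, sub_zero]
  have hkey : app (1 - p) x = w - app p w := by
    have hmat : (1 : Matrix (Fin N) (Fin N) ℝ) - p = (1 - q) - p * (1 - q) := by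
      rw [Matrix.mul_sub, Matrix.mul_one, hpq]; abel
    rw [hmat, app_sub, hw', app_mul, hw']
  have horth : ⟪w, app p w⟫ = 0 := by
    rw [← hw', inner_app]
    have hT : (1 - q)ᵀ = 1 - q := by rw [Matrix.transpose_sub, Matrix.transpose_one, hqs]
    rw [hT, ← app_mul]
    rw [show (1 - q) * p = 0 from by rw [Matrix.sub_mul, Matrix.one_mul, hqp, sub_self]]
    rw [app_zero, inner_zero_right]
  have hpyth : ‖app (1 - p) x‖ ^ 2 = ‖w‖ ^ 2 + ‖app p w‖ ^ 2 := by
    rw [hkey]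
    have := norm_sub_sq_real w (app p w)
    rw [horth] at this
    linarith
  have hpw : ‖app p w‖ ≤ c * ‖w‖ := by
    calc ‖app p w‖ = ‖app (p * (1 - q)) w‖ := by rw [app_mul, h1mw]
      _ ≤ ‖p * (1 - q)‖ * ‖w‖ := app_le _ _
      _ ≤ c * ‖w‖ := by
          have := norm_nonneg w
          nlinarith
  have hwx : ‖w‖ ≤ ‖x‖ := perp_q_le q hqs hqq x
  have hfin : ‖app (1 - p) x‖ ^ 2 ≤ (‖p‖ * ‖x‖) ^ 2 := by
    have h0w : 0 ≤ ‖w‖ := norm_nonneg _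
    have h0x : 0 ≤ ‖x‖ := norm_nonneg _
    have hpw2 : ‖app p w‖ ^ 2 ≤ c ^ 2 * ‖w‖ ^ 2 := by
      nlinarith [norm_nonneg (app p w), mul_nonneg hc h0w]
    have hw2 : ‖w‖ ^ 2 ≤ ‖x‖ ^ 2 := by nlinarith
    have hp1 : (0:ℝ) ≤ ‖p‖ ^ 2 - 1 := by nlinarith [hnp1]
    have h6 := mul_le_mul_of_nonneg_left hw2 (by positivity : (0:ℝ) ≤ ‖p‖ ^ 2)
    nlinarith [hpw2, hw2, hc2, hp1, h6]
  exact le_of_sq_le_sq2 (mul_nonneg (norm_nonneg p) (norm_nonneg _)) hfin (norm_nonneg _)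

lemma iso_norm_le_one {m n : ℕ} (A : Matrix (Fin m) (Fin n) ℝ) (h : Aᵀ * A = 1) : ‖A‖ ≤ 1 := by
  refine norm_le_of_app _ zero_le_one fun x => ?_
  rw [one_mul]
  have hsq : ‖app A x‖ ^ 2 = ‖x‖ ^ 2 := by
    rw [← real_inner_self_eq_norm_sq, ← real_inner_self_eq_norm_sq, inner_app, ← app_mul, h,
      app_one]
  exact le_of_sq_le_sq2 (norm_nonneg _) (le_of_eq hsq) (norm_nonneg _)

lemma symm_idem_norm_le_one {N : ℕ} (q : Matrix (Fin N) (Fin N) ℝ) (hqs : qᵀ = q)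
    (hqq : q * q = q) : ‖q‖ ≤ 1 := by
  refine norm_le_of_app _ zero_le_one fun x => ?_
  rw [one_mul]
  exact app_q_le q hqs hqq x

end Pre

open scoped Matrix.Norms.L2Operator RealInnerProductSpace

lemma specNorm_eq {m n : ℕ} (A : Matrix (Fin m) (Fin n) ℝ) : specNorm A = ‖A‖ := rfl

lemma leftPinvT {R n : ℕ} (B : Matrix (Fin R) (Fin n) ℝ) :
    (leftPinv B)ᵀ = B * (Bᵀ * B)⁻¹ := by
  simp only [leftPinv, Matrix.transpose_mul, Matrix.transpose_nonsing_inv,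
    Matrix.transpose_transpose]

lemma QR_symm {R n : ℕ} (B : Matrix (Fin R) (Fin n) ℝ) :
    (B * leftPinv B)ᵀ = B * leftPinv B := by
  rw [Matrix.transpose_mul, leftPinvT, leftPinv, Matrix.mul_assoc]

/-- The least-squares interpolation operator satisfies
`‖I - Y_α (PᵀY_α)† Pᵀ‖ ≤ ‖(PᵀY)⁻¹‖`, provided `Y_α (PᵀY_α)† Pᵀ` is a
nontrivial projector (neither `0` nor `I`). Here `Y_α = Y Yₙ`. -/
theorem local_ls_interp_operator_bound {M R n : ℕ} (hMR : R ≤ M) (hRn : n ≤ R)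
    (Y : Matrix (Fin M) (Fin R) ℝ) (hY : Yᵀ * Y = 1)
    (Yn : Matrix (Fin R) (Fin n) ℝ) (hYn : Ynᵀ * Yn = 1)
    (η : Fin R → Fin M) (hη : Function.Injective η)
    (P : Matrix (Fin M) (Fin R) ℝ)
    (hP : ∀ i j, P i j = if i = η j then 1 else 0)
    (hinv : IsUnit (Pᵀ * Y))
    (hne0 : (Y * Yn) * leftPinv (Pᵀ * (Y * Yn)) * Pᵀ ≠ 0)
    (hneI : (Y * Yn) * leftPinv (Pᵀ * (Y * Yn)) * Pᵀ ≠ 1) :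
    specNorm ((1 : Matrix (Fin M) (Fin M) ℝ) -
        (Y * Yn) * leftPinv (Pᵀ * (Y * Yn)) * Pᵀ) ≤
      specNorm ((Pᵀ * Y)⁻¹) := by
  clear hneI hMR hRn
  rw [specNorm_eq, specNorm_eq]
  rw [Matrix.mul_assoc] at hne0 ⊢
  set Yα := Y * Yn with hYαdef
  set B := Pᵀ * Yα with hBdef
  set lB := leftPinv B with hlBdef
  set A := Pᵀ * Y with hAdef
  set W := lB * Pᵀ with hWdef
  set pm := Yα * W with hpmdef
  -- basic facts
  have hdetA : IsUnit A.det := (Matrix.isUnit_iff_isUnit_det _).mp hinv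
  have hAinv : A⁻¹ * A = 1 := Matrix.nonsing_inv_mul _ hdetA
  have hBA : B = A * Yn := by rw [hBdef, hAdef, hYαdef, Matrix.mul_assoc]
  have hPtP : Pᵀ * P = 1 := by
    ext j k
    simp only [Matrix.mul_apply, Matrix.transpose_apply, hP, Matrix.one_apply, ite_mul, one_mul,
      zero_mul]
    rw [Finset.sum_ite_eq' Finset.univ (η j) (fun i => if i = η k then (1:ℝ) else 0)]
    simp [hη.eq_iff, eq_comm]
  -- Yn, B injectivity and invertibility of BᵀB
  have hYnInj : ∀ v, Yn *ᵥ v = 0 → v = 0 := by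
    intro v hv
    have h1 : Ynᵀ *ᵥ (Yn *ᵥ v) = 0 := by rw [hv, Matrix.mulVec_zero]
    rwa [Matrix.mulVec_mulVec, hYn, Matrix.one_mulVec] at h1
  have hBInj : ∀ v, B *ᵥ v = 0 → v = 0 := by
    intro v hv
    apply hYnInj
    have h1 : A⁻¹ *ᵥ (B *ᵥ v) = 0 := by rw [hv, Matrix.mulVec_zero]
    rwa [Matrix.mulVec_mulVec, hBA, ← Matrix.mul_assoc, hAinv, Matrix.one_mul] at h1
  have hker : ∀ v, (Bᵀ * B) *ᵥ v = 0 → v = 0 := by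
    intro v hv
    have h0 : (B *ᵥ v) ⬝ᵥ (B *ᵥ v) = 0 := by
      have h1 : v ⬝ᵥ ((Bᵀ * B) *ᵥ v) = 0 := by rw [hv, dotProduct_zero]
      rwa [← Matrix.mulVec_mulVec, Matrix.dotProduct_mulVec, Matrix.vecMul_transpose] at h1
    have hB0 : B *ᵥ v = 0 := by
      funext i
      have := (Finset.sum_eq_zero_iff_of_nonneg
        (fun i _ => mul_self_nonneg ((B *ᵥ v) i))).mp h0 i (Finset.mem_univ i)
      exact mul_self_eq_zero.mp this
    exact hBInj v hB0
  have hBtB : IsUnit ((Bᵀ * B).det) := by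
    rw [← Matrix.isUnit_iff_isUnit_det, ← Matrix.mulVec_injective_iff_isUnit]
    intro u v huv
    have h0 : (Bᵀ * B) *ᵥ (u - v) = 0 := by rw [Matrix.mulVec_sub, huv, sub_self]
    exact sub_eq_zero.mp (hker _ h0)
  have hlBB : lB * B = 1 := by
    rw [hlBdef, leftPinv, Matrix.mul_assoc, Matrix.nonsing_inv_mul _ hBtB]
  -- the projector q
  set q := Yα * Yαᵀ with hqdef
  have hYαt : Yαᵀ * Yα = 1 := by
    rw [hYαdef, Matrix.transpose_mul, Matrix.mul_assoc, ← Matrix.mul_assoc Yᵀ Y Yn, hY,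
      Matrix.one_mul, hYn]
  have hWYα : W * Yα = 1 := by rw [hWdef, Matrix.mul_assoc, ← hBdef, hlBB]
  have hqs : qᵀ = q := by
    rw [hqdef, Matrix.transpose_mul, Matrix.transpose_transpose]
  have hqq : q * q = q := by
    rw [hqdef, Matrix.mul_assoc, ← Matrix.mul_assoc Yαᵀ Yα Yαᵀ, hYαt, Matrix.one_mul]
  have hqp : q * pm = pm := by
    rw [hqdef, hpmdef, Matrix.mul_assoc, ← Matrix.mul_assoc Yαᵀ Yα W, hYαt, Matrix.one_mul]
  have hpq : pm * q = q := by
    rw [hpmdef, hqdef, Matrix.mul_assoc, ← Matrix.mul_assoc W Yα Yαᵀ, hWYα, Matrix.one_mul]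
  have hq0 : q ≠ 0 := by
    intro h
    apply hne0
    rw [← hqp, h, Matrix.zero_mul]
  -- norm bound on pm
  set QR := B * lB with hQRdef
  have hQRs : QRᵀ = QR := by rw [hQRdef, hlBdef]; exact QR_symm B
  have hQRq : QR * QR = QR := by
    rw [hQRdef, Matrix.mul_assoc, ← Matrix.mul_assoc lB B lB, hlBB, Matrix.one_mul]
  have hAB : A⁻¹ * B = Yn := by rw [hBA, ← Matrix.mul_assoc, hAinv, Matrix.one_mul]
  have hpm2 : pm = Y * (A⁻¹ * (QR * Pᵀ)) := by
    rw [hpmdef, hQRdef, hWdef, hYαdef]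
    rw [Matrix.mul_assoc B lB Pᵀ, ← Matrix.mul_assoc A⁻¹ B (lB * Pᵀ), hAB,
      ← Matrix.mul_assoc Y Yn (lB * Pᵀ), Matrix.mul_assoc]
  have hYle : ‖Y‖ ≤ 1 := iso_norm_le_one Y hY
  have hPtle : ‖Pᵀ‖ ≤ 1 := by rw [normT]; exact iso_norm_le_one P hPtP
  have hQRle : ‖QR‖ ≤ 1 := symm_idem_norm_le_one QR hQRs hQRq
  have hpmle : ‖pm‖ ≤ ‖A⁻¹‖ := by
    rw [hpm2]
    calc ‖Y * (A⁻¹ * (QR * Pᵀ))‖ ≤ ‖Y‖ * ‖A⁻¹ * (QR * Pᵀ)‖ := Matrix.l2_opNorm_mul _ _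
      _ ≤ 1 * ‖A⁻¹ * (QR * Pᵀ)‖ := by
          apply mul_le_mul_of_nonneg_right hYle (norm_nonneg _)
      _ = ‖A⁻¹ * (QR * Pᵀ)‖ := one_mul _
      _ ≤ ‖A⁻¹‖ * ‖QR * Pᵀ‖ := Matrix.l2_opNorm_mul _ _
      _ ≤ ‖A⁻¹‖ * 1 := by
          apply mul_le_mul_of_nonneg_left _ (norm_nonneg _)
          calc ‖QR * Pᵀ‖ ≤ ‖QR‖ * ‖Pᵀ‖ := Matrix.l2_opNorm_mul _ _
            _ ≤ 1 * 1 := mul_le_mul hQRle hPtle (norm_nonneg _) zero_le_one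
            _ = 1 := one_mul 1
      _ = ‖A⁻¹‖ := mul_one _
  calc ‖1 - pm‖ ≤ ‖pm‖ := kato pm q hqs hqq hqp hpq hq0
    _ ≤ ‖A⁻¹‖ := hpmle
end
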